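/- Let u ∈ C_0^{m+1}(ℝ^d, ℝ^d) and φ, ψ be C^m diffeomorphisms with ‖φ − id‖_{m,∞} ≤ r and ‖ψ − id‖_{m,∞} ≤ r. Then ‖u ∘ φ − u ∘ ψ‖_{m,∞} ≤ C_r ‖u‖_{m+1,∞} ‖φ − ψ‖_{m,∞} for a constant C_r depending only on r, m, d. -/

import Mathlib

noncomputable section

open Filter Finset

section Helpers

variable {E F : Type*} [NormedAddCommGroup E] [NormedSpace ℝ E]
  [NormedAddCommGroup F] [NormedSpace ℝ F]

lemma itfd_sub_apply {i : ℕ} {f g : E → F} (hf : ContDiff ℝ i f) (hg : ContDiff ℝ i g) (x : E) :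
    iteratedFDeriv ℝ i (fun y => f y - g y) x
      = iteratedFDeriv ℝ i f x - iteratedFDeriv ℝ i g x := by
  have h : (fun y => f y - g y) = fun y => f y + -(g y) := by
    funext y; simp [sub_eq_add_neg]
  rw [h, iteratedFDeriv_add_apply' hf.contDiffAt hg.neg.contDiffAt]
  have h2 : (fun y => -(g y)) = -g := rfl
  rw [h2, iteratedFDeriv_neg_apply, sub_eq_add_neg]

lemma bddAbove_range_of_tendsto_cocompact {α : Type*} [TopologicalSpace α]
    {f : α → ℝ} (hf : Continuous f) (h : Tendsto f (cocompact α) (nhds 0)) :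
    BddAbove (Set.range f) := by
  have h1 : ∀ᶠ x in cocompact α, f x < 1 := h.eventually (eventually_lt_nhds zero_lt_one)
  obtain ⟨K, hK, hK1⟩ := Filter.mem_cocompact.mp h1
  obtain ⟨b, hb⟩ := (hK.image hf).bddAbove
  refine ⟨max b 1, ?_⟩
  rintro - ⟨x, rfl⟩
  by_cases hx : x ∈ K
  · exact le_max_of_le_left (hb ⟨x, hx, rfl⟩)
  · exact le_max_of_le_right (hK1 hx).le

/-- Bound on the iterated derivatives of `fderiv φ` when `φ - id` has derivatives `≤ r`. -/
lemma fderiv_near_id_bound {φ : E → E} {m : ℕ} {r : ℝ}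
    (hφ : ContDiff ℝ (m + 1 : ℕ) φ)
    (hb : ∀ k ≤ m + 1, ∀ x, ‖iteratedFDeriv ℝ k (fun y => φ y - y) x‖ ≤ r) :
    ∀ n ≤ m, ∀ x : E, ‖iteratedFDeriv ℝ n (fderiv ℝ φ) x‖ ≤ r + 1 := by
  intro n hn x
  have hφid : ContDiff ℝ (m + 1 : ℕ) (fun y => φ y - y) := hφ.sub contDiff_id
  have hdφ : Differentiable ℝ φ := hφ.differentiable (by simp)
  have hder : ContDiff ℝ (n : ℕ) (fderiv ℝ (fun z => φ z - z)) := by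
    apply hφid.fderiv_right
    exact_mod_cast Nat.succ_le_succ hn
  have heq : fderiv ℝ φ =
      fun y => fderiv ℝ (fun z => φ z - z) y + ContinuousLinearMap.id ℝ E := by
    funext y
    have h1 : fderiv ℝ (fun z => φ z - z) y = fderiv ℝ φ y - ContinuousLinearMap.id ℝ E := by
      rw [fderiv_fun_sub (hdφ y) differentiableAt_fun_id]
      simp [fderiv_id']
    rw [h1]; abel
  rw [heq, iteratedFDeriv_add_apply' hder.contDiffAt contDiff_const.contDiffAt]
  have h2 : ‖iteratedFDeriv ℝ n (fderiv ℝ (fun z => φ z - z)) x‖ ≤ r := by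
    rw [norm_iteratedFDeriv_fderiv]
    exact hb (n + 1) (Nat.succ_le_succ hn) x
  have h3 : ‖iteratedFDeriv ℝ n (fun _ : E => ContinuousLinearMap.id ℝ E) x‖ ≤ 1 := by
    rcases Nat.eq_zero_or_pos n with h | h
    · subst h
      rw [norm_iteratedFDeriv_zero]
      exact ContinuousLinearMap.norm_id_le
    · rw [iteratedFDeriv_const_of_ne (Nat.pos_iff_ne_zero.mp h)]
      simp
  calc ‖iteratedFDeriv ℝ n (fderiv ℝ (fun z => φ z - z)) x
        + iteratedFDeriv ℝ n (fun _ : E => ContinuousLinearMap.id ℝ E) x‖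
      ≤ _ + _ := norm_add_le _ _
    _ ≤ r + 1 := add_le_add h2 h3

end Helpers

set_option maxHeartbeats 2000000 in
/-- Key inductive Lipschitz estimate for composition. -/
lemma lemA (d : ℕ) (r : ℝ) (hr : 0 < r) :
    ∀ m : ℕ, ∃ C : ℝ, 0 < C ∧
      ∀ (F : Type) [NormedAddCommGroup F] [NormedSpace ℝ F],
      ∀ (u : EuclideanSpace ℝ (Fin d) → F)
        (φ ψ : EuclideanSpace ℝ (Fin d) → EuclideanSpace ℝ (Fin d)) (M δ : ℝ),
        ContDiff ℝ (m + 1 : ℕ) u →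
        (∀ k ≤ m + 1, ∀ x, ‖iteratedFDeriv ℝ k u x‖ ≤ M) →
        ContDiff ℝ (m : ℕ) φ → ContDiff ℝ (m : ℕ) ψ →
        (∀ k ≤ m, ∀ x, ‖iteratedFDeriv ℝ k (fun y => φ y - y) x‖ ≤ r) →
        (∀ k ≤ m, ∀ x, ‖iteratedFDeriv ℝ k (fun y => ψ y - y) x‖ ≤ r) →
        (∀ k ≤ m, ∀ x, ‖iteratedFDeriv ℝ k (fun y => φ y - ψ y) x‖ ≤ δ) →
        ∀ j ≤ m, ∀ x, ‖iteratedFDeriv ℝ j (fun y => u (φ y) - u (ψ y)) x‖ ≤ C * M * δ := by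
  intro m
  induction m with
  | zero =>
    refine ⟨1, one_pos, ?_⟩
    intro F _ _ u φ ψ M δ hu hM hφ hψ hφr hψr hδ j hj x
    interval_cases j
    rw [norm_iteratedFDeriv_zero]
    have hM0 : 0 ≤ M := by
      have h00 := hM 0 (Nat.zero_le _) 0
      exact le_trans (norm_nonneg _) h00
    have hdu : ∀ y, DifferentiableAt ℝ u y := fun y =>
      (hu.differentiable (by simp)).differentiableAt
    have hfd : ∀ y, ‖fderiv ℝ u y‖ ≤ M := by
      intro y
      have : ‖fderiv ℝ u y‖ = ‖iteratedFDeriv ℝ 1 u y‖ := by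
        rw [← norm_iteratedFDeriv_fderiv, norm_iteratedFDeriv_zero]
      rw [this]
      exact hM 1 le_rfl y
    have key : ‖u (φ x) - u (ψ x)‖ ≤ M * ‖φ x - ψ x‖ :=
      convex_univ.norm_image_sub_le_of_norm_fderiv_le (fun y _ => hdu y)
        (fun y _ => hfd y) trivial trivial
    have hd0 : ‖φ x - ψ x‖ ≤ δ := by
      simpa [norm_iteratedFDeriv_zero] using hδ 0 le_rfl x
    calc ‖u (φ x) - u (ψ x)‖ ≤ M * ‖φ x - ψ x‖ := key
      _ ≤ M * δ := mul_le_mul_of_nonneg_left hd0 hM0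
      _ = 1 * M * δ := by ring
  | succ m IH =>
    obtain ⟨C, hC, hIH⟩ := IH
    refine ⟨C + 2 ^ m * (r + 1) * C + 2 ^ m * (m.factorial : ℝ) * (r + 1) ^ m,
      by positivity, ?_⟩
    intro F _ _ u φ ψ M δ hu hM hφ hψ hφr hψr hδ j hj x
    have hM0 : 0 ≤ M := le_trans (norm_nonneg _) (hM 0 (Nat.zero_le _) 0)
    have hδ0 : 0 ≤ δ := le_trans (norm_nonneg _) (hδ 0 (Nat.zero_le _) 0)
    have hr1 : (1 : ℝ) ≤ r + 1 := by linarith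
    have hMδ : 0 ≤ M * δ := mul_nonneg hM0 hδ0
    -- the IH is applicable with `fderiv ℝ u` in place of `u`
    have hv : ContDiff ℝ (m + 1 : ℕ) (fderiv ℝ u) := by
      apply hu.fderiv_right
      exact_mod_cast le_refl (m + 2)
    have hMv : ∀ k ≤ m + 1, ∀ y, ‖iteratedFDeriv ℝ k (fderiv ℝ u) y‖ ≤ M := by
      intro k hk y
      rw [norm_iteratedFDeriv_fderiv]
      exact hM (k + 1) (Nat.succ_le_succ hk) y
    have hIH' : ∀ k ≤ m, ∀ y,
        ‖iteratedFDeriv ℝ k (fun z => fderiv ℝ u (φ z) - fderiv ℝ u (ψ z)) y‖ ≤ C * M * δ :=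
      hIH _ (fderiv ℝ u) φ ψ M δ hv hMv
        (hφ.of_le (by exact_mod_cast Nat.le_succ m))
        (hψ.of_le (by exact_mod_cast Nat.le_succ m))
        (fun k hk => hφr k (le_trans hk (Nat.le_succ m)))
        (fun k hk => hψr k (le_trans hk (Nat.le_succ m)))
        (fun k hk => hδ k (le_trans hk (Nat.le_succ m)))
    rcases Nat.lt_or_ge j (m + 1) with hjm | hjm
    · -- use the inductive bound directly
      have h1 : ‖iteratedFDeriv ℝ j (fun y => u (φ y) - u (ψ y)) x‖ ≤ C * M * δ := by
        refine hIH _ u φ ψ M δ (hu.of_le (by exact_mod_cast Nat.le_succ (m + 1)))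
          (fun k hk => hM k (le_trans hk (Nat.le_succ _)))
          (hφ.of_le (by exact_mod_cast Nat.le_succ m))
          (hψ.of_le (by exact_mod_cast Nat.le_succ m))
          (fun k hk => hφr k (le_trans hk (Nat.le_succ m)))
          (fun k hk => hψr k (le_trans hk (Nat.le_succ m)))
          (fun k hk => hδ k (le_trans hk (Nat.le_succ m)))
          j (Nat.lt_succ_iff.mp hjm) x
      have h2 : 0 ≤ (2 ^ m * (r + 1) * C + 2 ^ m * (m.factorial : ℝ) * (r + 1) ^ m) * (M * δ) := by
        have : (0:ℝ) ≤ 2 ^ m * (r + 1) * C + 2 ^ m * (m.factorial : ℝ) * (r + 1) ^ m := by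
          positivity
        exact mul_nonneg this hMδ
      nlinarith [h1, h2]
    · have hj1 : j = m + 1 := le_antisymm hj hjm
      subst hj1
      have hdu : Differentiable ℝ u := hu.differentiable (by simp)
      have hdφ : Differentiable ℝ φ := hφ.differentiable (by simp)
      have hdψ : Differentiable ℝ ψ := hψ.differentiable (by simp)
      have hva : ContDiff ℝ (m : ℕ) (fun y => fderiv ℝ u (φ y) - fderiv ℝ u (ψ y)) :=
        ((hv.comp hφ).sub (hv.comp hψ)).of_le (by exact_mod_cast Nat.le_succ m)
      have hcb : ContDiff ℝ (m : ℕ) (fderiv ℝ φ) := by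
        apply hφ.fderiv_right
        exact_mod_cast le_refl (m + 1)
      have hcc2 : ContDiff ℝ (m : ℕ) (fun y => fderiv ℝ u (ψ y)) :=
        (hv.comp hψ).of_le (by exact_mod_cast Nat.le_succ m)
      have hce : ContDiff ℝ (m : ℕ) (fun y => fderiv ℝ φ y - fderiv ℝ ψ y) := by
        apply ContDiff.sub hcb
        apply hψ.fderiv_right
        exact_mod_cast le_refl (m + 1)
      set L := ContinuousLinearMap.compL ℝ (EuclideanSpace ℝ (Fin d))
        (EuclideanSpace ℝ (Fin d)) F with hL_def
      have hLapp : ∀ (p : EuclideanSpace ℝ (Fin d) →L[ℝ] F)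
          (q : EuclideanSpace ℝ (Fin d) →L[ℝ] EuclideanSpace ℝ (Fin d)),
          L p q = p.comp q := fun p q => rfl
      have heq : (fderiv ℝ (fun y => u (φ y) - u (ψ y)))
          = fun y => L (fderiv ℝ u (φ y) - fderiv ℝ u (ψ y)) (fderiv ℝ φ y)
              + L (fderiv ℝ u (ψ y)) (fderiv ℝ φ y - fderiv ℝ ψ y) := by
        funext y
        have hd1 : DifferentiableAt ℝ (fun z => u (φ z)) y :=
          ((hdu (φ y)).comp y (hdφ y))
        have hd2 : DifferentiableAt ℝ (fun z => u (ψ z)) y :=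
          ((hdu (ψ y)).comp y (hdψ y))
        rw [fderiv_fun_sub hd1 hd2]
        have e1 : fderiv ℝ (fun z => u (φ z)) y = (fderiv ℝ u (φ y)).comp (fderiv ℝ φ y) :=
          fderiv_comp y (hdu (φ y)) (hdφ y)
        have e2 : fderiv ℝ (fun z => u (ψ z)) y = (fderiv ℝ u (ψ y)).comp (fderiv ℝ ψ y) :=
          fderiv_comp y (hdu (ψ y)) (hdψ y)
        rw [e1, e2, hLapp, hLapp]
        rw [ContinuousLinearMap.sub_comp, ContinuousLinearMap.comp_sub]
        abel
      have hnorm : ‖iteratedFDeriv ℝ (m + 1) (fun y => u (φ y) - u (ψ y)) x‖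
          = ‖iteratedFDeriv ℝ m
              (fun y => L (fderiv ℝ u (φ y) - fderiv ℝ u (ψ y)) (fderiv ℝ φ y)
                + L (fderiv ℝ u (ψ y)) (fderiv ℝ φ y - fderiv ℝ ψ y)) x‖ := by
        rw [← norm_iteratedFDeriv_fderiv, heq]
      rw [hnorm]
      have hg1 : ContDiff ℝ (m : ℕ)
          (fun y => L (fderiv ℝ u (φ y) - fderiv ℝ u (ψ y)) (fderiv ℝ φ y)) :=
        L.isBoundedBilinearMap.contDiff.comp (hva.prodMk hcb)
      have hg2 : ContDiff ℝ (m : ℕ)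
          (fun y => L (fderiv ℝ u (ψ y)) (fderiv ℝ φ y - fderiv ℝ ψ y)) :=
        L.isBoundedBilinearMap.contDiff.comp (hcc2.prodMk hce)
      rw [iteratedFDeriv_add_apply' hg1.contDiffAt hg2.contDiffAt]
      have hL1 := ContinuousLinearMap.norm_compL_le ℝ
        (EuclideanSpace ℝ (Fin d)) (EuclideanSpace ℝ (Fin d)) F
      -- bound the first bilinear term
      have hB1 : ‖iteratedFDeriv ℝ m
          (fun y => L (fderiv ℝ u (φ y) - fderiv ℝ u (ψ y)) (fderiv ℝ φ y)) x‖
          ≤ 2 ^ m * ((C * M * δ) * (r + 1)) := by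
        have h := L.norm_iteratedFDeriv_le_of_bilinear hva hcb x (le_refl (m : WithTop ℕ∞))
        have hsum : ∑ i ∈ Finset.range (m + 1),
            ((m.choose i : ℝ)
              * ‖iteratedFDeriv ℝ i (fun y => fderiv ℝ u (φ y) - fderiv ℝ u (ψ y)) x‖
              * ‖iteratedFDeriv ℝ (m - i) (fderiv ℝ φ) x‖)
            ≤ ∑ i ∈ Finset.range (m + 1), (m.choose i : ℝ) * ((C * M * δ) * (r + 1)) := by
          apply Finset.sum_le_sum
          intro i hi
          have hi' : i ≤ m := Nat.lt_succ_iff.mp (Finset.mem_range.mp hi)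
          have ha1 : ‖iteratedFDeriv ℝ i (fun y => fderiv ℝ u (φ y) - fderiv ℝ u (ψ y)) x‖
              ≤ C * M * δ := hIH' i hi' x
          have hb1 : ‖iteratedFDeriv ℝ (m - i) (fderiv ℝ φ) x‖ ≤ r + 1 :=
            fderiv_near_id_bound hφ hφr (m - i) (Nat.sub_le m i) x
          have h0 : (0:ℝ) ≤ (m.choose i : ℝ) := Nat.cast_nonneg _
          calc (m.choose i : ℝ)
              * ‖iteratedFDeriv ℝ i (fun y => fderiv ℝ u (φ y) - fderiv ℝ u (ψ y)) x‖
              * ‖iteratedFDeriv ℝ (m - i) (fderiv ℝ φ) x‖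
              ≤ (m.choose i : ℝ) * (C * M * δ) * (r + 1) := by
                apply mul_le_mul
                · exact mul_le_mul_of_nonneg_left ha1 h0
                · exact hb1
                · exact norm_nonneg _
                · exact mul_nonneg h0 (mul_nonneg (mul_nonneg hC.le hM0) hδ0)
            _ = (m.choose i : ℝ) * ((C * M * δ) * (r + 1)) := by ring
        have hchoose : ∑ i ∈ Finset.range (m + 1), (m.choose i : ℝ) = 2 ^ m := by
          exact_mod_cast Nat.sum_range_choose m
        refine le_trans h (le_trans (mul_le_mul_of_nonneg_right hL1 ?_) ?_)
        · apply Finset.sum_nonneg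
          intro i _
          positivity
        · rw [one_mul]
          refine le_trans hsum ?_
          rw [← Finset.sum_mul, hchoose]
      -- bound the second bilinear term
      have hcbound : ∀ k ≤ m, ‖iteratedFDeriv ℝ k (fun y => fderiv ℝ u (ψ y)) x‖
          ≤ (m.factorial : ℝ) * M * (r + 1) ^ m := by
        intro k hk
        have hcomp : ‖iteratedFDeriv ℝ k ((fderiv ℝ u) ∘ ψ) x‖
            ≤ (k.factorial : ℝ) * M * (r + 1) ^ k := by
          apply norm_iteratedFDeriv_comp_le hv hψ
            (by exact_mod_cast le_trans hk (Nat.le_succ m)) x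
          · intro i hi
            exact hMv i (le_trans hi (le_trans hk (Nat.le_succ m))) (ψ x)
          · intro i hi1 hik
            obtain ⟨n, rfl⟩ := Nat.exists_eq_add_of_le hi1
            have hb2 : ‖iteratedFDeriv ℝ (1 + n) ψ x‖ ≤ r + 1 := by
              rw [Nat.add_comm 1 n, ← norm_iteratedFDeriv_fderiv]
              exact fderiv_near_id_bound hψ hψr n (by omega) x
            calc ‖iteratedFDeriv ℝ (1 + n) ψ x‖ ≤ r + 1 := hb2
              _ = (r + 1) ^ 1 := (pow_one _).symm
              _ ≤ (r + 1) ^ (1 + n) := pow_le_pow_right₀ hr1 (Nat.le_add_right 1 n)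
        have hle : (k.factorial : ℝ) * M * (r + 1) ^ k
            ≤ (m.factorial : ℝ) * M * (r + 1) ^ m := by
          have h1 : (k.factorial : ℝ) ≤ (m.factorial : ℝ) := by
            exact_mod_cast Nat.factorial_le hk
          have h2 : (r + 1 : ℝ) ^ k ≤ (r + 1) ^ m := pow_le_pow_right₀ hr1 hk
          have h4 : (0:ℝ) ≤ (r + 1 : ℝ) ^ k := by positivity
          have h5 : (k.factorial : ℝ) * M ≤ (m.factorial : ℝ) * M :=
            mul_le_mul_of_nonneg_right h1 hM0
          exact mul_le_mul h5 h2 h4 (mul_nonneg (Nat.cast_nonneg _) hM0)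
        exact le_trans hcomp hle
      have hebound : ∀ k ≤ m, ‖iteratedFDeriv ℝ k (fun y => fderiv ℝ φ y - fderiv ℝ ψ y) x‖
          ≤ δ := by
        intro k hk
        have heeq : (fun y => fderiv ℝ φ y - fderiv ℝ ψ y)
            = fderiv ℝ (fun y => φ y - ψ y) := by
          funext y
          rw [fderiv_fun_sub (hdφ y) (hdψ y)]
        rw [heeq, norm_iteratedFDeriv_fderiv]
        exact hδ (k + 1) (Nat.succ_le_succ hk) x
      have hB2 : ‖iteratedFDeriv ℝ m
          (fun y => L (fderiv ℝ u (ψ y)) (fderiv ℝ φ y - fderiv ℝ ψ y)) x‖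
          ≤ 2 ^ m * (((m.factorial : ℝ) * M * (r + 1) ^ m) * δ) := by
        have h := L.norm_iteratedFDeriv_le_of_bilinear hcc2 hce x (le_refl (m : WithTop ℕ∞))
        have hsum : ∑ i ∈ Finset.range (m + 1),
            ((m.choose i : ℝ) * ‖iteratedFDeriv ℝ i (fun y => fderiv ℝ u (ψ y)) x‖
              * ‖iteratedFDeriv ℝ (m - i) (fun y => fderiv ℝ φ y - fderiv ℝ ψ y) x‖)
            ≤ ∑ i ∈ Finset.range (m + 1),
              (m.choose i : ℝ) * (((m.factorial : ℝ) * M * (r + 1) ^ m) * δ) := by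
          apply Finset.sum_le_sum
          intro i hi
          have hi' : i ≤ m := Nat.lt_succ_iff.mp (Finset.mem_range.mp hi)
          have hc1 := hcbound i hi'
          have he1 := hebound (m - i) (Nat.sub_le m i)
          have h0 : (0:ℝ) ≤ (m.choose i : ℝ) := Nat.cast_nonneg _
          calc (m.choose i : ℝ) * ‖iteratedFDeriv ℝ i (fun y => fderiv ℝ u (ψ y)) x‖
              * ‖iteratedFDeriv ℝ (m - i) (fun y => fderiv ℝ φ y - fderiv ℝ ψ y) x‖
              ≤ (m.choose i : ℝ) * ((m.factorial : ℝ) * M * (r + 1) ^ m) * δ := by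
                apply mul_le_mul
                · exact mul_le_mul_of_nonneg_left hc1 h0
                · exact he1
                · exact norm_nonneg _
                · exact mul_nonneg h0 (mul_nonneg (mul_nonneg
                    (Nat.cast_nonneg _) hM0) (pow_nonneg (by linarith) m))
            _ = (m.choose i : ℝ) * (((m.factorial : ℝ) * M * (r + 1) ^ m) * δ) := by ring
        have hchoose : ∑ i ∈ Finset.range (m + 1), (m.choose i : ℝ) = 2 ^ m := by
          exact_mod_cast Nat.sum_range_choose m
        refine le_trans h (le_trans (mul_le_mul_of_nonneg_right hL1 ?_) ?_)
        · apply Finset.sum_nonneg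
          intro i _
          positivity
        · rw [one_mul]
          refine le_trans hsum ?_
          rw [← Finset.sum_mul, hchoose]
      calc ‖iteratedFDeriv ℝ m
            (fun y => L (fderiv ℝ u (φ y) - fderiv ℝ u (ψ y)) (fderiv ℝ φ y)) x
            + iteratedFDeriv ℝ m
            (fun y => L (fderiv ℝ u (ψ y)) (fderiv ℝ φ y - fderiv ℝ ψ y)) x‖
          ≤ _ + _ := norm_add_le _ _
        _ ≤ 2 ^ m * ((C * M * δ) * (r + 1))
            + 2 ^ m * (((m.factorial : ℝ) * M * (r + 1) ^ m) * δ) := add_le_add hB1 hB2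
        _ ≤ (C + 2 ^ m * (r + 1) * C + 2 ^ m * (m.factorial : ℝ) * (r + 1) ^ m) * M * δ := by
            nlinarith [hMδ, hC.le]

end section

noncomputable section

/-- The `C^k`-sup norm `‖f‖_{k,∞} = Σ_{j≤k} sup_x ‖D^j f(x)‖`. -/
def cSupNorm {d : ℕ} (k : ℕ)
    (f : EuclideanSpace ℝ (Fin d) → EuclideanSpace ℝ (Fin d)) : ℝ :=
  ∑ j ∈ Finset.range (k + 1), ⨆ x, ‖iteratedFDeriv ℝ j f x‖

/-- for `u ∈ C_0^{m+1}(ℝ^d,ℝ^d)` and `C^m` diffeomorphisms `φ, ψ`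
with `‖φ − id‖_{m,∞} ≤ r`, `‖ψ − id‖_{m,∞} ≤ r`, one has
`‖u ∘ φ − u ∘ ψ‖_{m,∞} ≤ C_r ‖u‖_{m+1,∞} ‖φ − ψ‖_{m,∞}` with `C_r` depending
only on `r`, `m`, `d`. -/
theorem stmt14 (d m : ℕ) (r : ℝ) (hr : 0 < r) :
    ∃ C : ℝ, 0 < C ∧
      ∀ u φ ψ : EuclideanSpace ℝ (Fin d) → EuclideanSpace ℝ (Fin d),
        ContDiff ℝ (m + 1) u →
        (∀ k ≤ m + 1, Filter.Tendsto (fun x => ‖iteratedFDeriv ℝ k u x‖)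
          (Filter.cocompact (EuclideanSpace ℝ (Fin d))) (nhds 0)) →
        ContDiff ℝ m φ → Function.Bijective φ →
        ContDiff ℝ m ψ → Function.Bijective ψ →
        (∀ k ≤ m, ∀ x, ‖iteratedFDeriv ℝ k (fun y => φ y - y) x‖ ≤ r) →
        (∀ k ≤ m, ∀ x, ‖iteratedFDeriv ℝ k (fun y => ψ y - y) x‖ ≤ r) →
        cSupNorm m (fun x => u (φ x) - u (ψ x)) ≤
          C * cSupNorm (m + 1) u * cSupNorm m (fun x => φ x - ψ x) := by
  obtain ⟨C, hC, hA⟩ := lemA d r hr m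
  refine ⟨(m + 1) * C, mul_pos (by positivity) hC, ?_⟩
  intro u φ ψ hu hcc hφ _ hψ _ hφr hψr
  set M := cSupNorm (m + 1) u with hM_def
  set δ := cSupNorm m (fun x => φ x - ψ x) with hδ_def
  -- bounds on derivatives of u by M
  have hbu : ∀ k ≤ m + 1, BddAbove (Set.range fun x => ‖iteratedFDeriv ℝ k u x‖) := by
    intro k hk
    apply bddAbove_range_of_tendsto_cocompact
    · exact (hu.continuous_iteratedFDeriv (by exact_mod_cast hk)).norm
    · exact hcc k hk
  have hMnn : ∀ j ∈ Finset.range (m + 2), (0:ℝ) ≤ ⨆ x, ‖iteratedFDeriv ℝ j u x‖ :=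
    fun j _ => Real.iSup_nonneg fun x => norm_nonneg _
  have hM : ∀ k ≤ m + 1, ∀ x, ‖iteratedFDeriv ℝ k u x‖ ≤ M := by
    intro k hk x
    refine le_trans (le_ciSup (hbu k hk) x) ?_
    exact Finset.single_le_sum hMnn (Finset.mem_range.mpr (Nat.lt_succ_of_le hk))
  -- bounds on derivatives of φ - ψ by δ
  have hφid : ContDiff ℝ (m : ℕ) (fun y => φ y - y) := hφ.sub contDiff_id
  have hψid : ContDiff ℝ (m : ℕ) (fun y => ψ y - y) := hψ.sub contDiff_id
  have hsubeq : ∀ k ≤ m, ∀ x, iteratedFDeriv ℝ k (fun y => φ y - ψ y) x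
      = iteratedFDeriv ℝ k (fun y => φ y - y) x - iteratedFDeriv ℝ k (fun y => ψ y - y) x := by
    intro k hk x
    have h1 : (fun y => φ y - ψ y) = fun y => (φ y - y) - (ψ y - y) := by
      funext y; abel
    rw [h1]
    exact itfd_sub_apply (hφid.of_le (by exact_mod_cast hk)) (hψid.of_le (by exact_mod_cast hk)) x
  have hbδ : ∀ k ≤ m, BddAbove (Set.range fun x => ‖iteratedFDeriv ℝ k (fun y => φ y - ψ y) x‖) := by
    intro k hk
    refine ⟨r + r, ?_⟩
    rintro - ⟨x, rfl⟩
    show ‖iteratedFDeriv ℝ k (fun y => φ y - ψ y) x‖ ≤ r + r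
    rw [hsubeq k hk x]
    calc ‖_ - _‖ ≤ ‖_‖ + ‖_‖ := norm_sub_le _ _
      _ ≤ r + r := add_le_add (hφr k hk x) (hψr k hk x)
  have hδnn : ∀ j ∈ Finset.range (m + 1),
      (0:ℝ) ≤ ⨆ x, ‖iteratedFDeriv ℝ j (fun y => φ y - ψ y) x‖ :=
    fun j _ => Real.iSup_nonneg fun x => norm_nonneg _
  have hδb : ∀ k ≤ m, ∀ x, ‖iteratedFDeriv ℝ k (fun y => φ y - ψ y) x‖ ≤ δ := by
    intro k hk x
    refine le_trans (le_ciSup (hbδ k hk) x) ?_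
    exact Finset.single_le_sum hδnn (Finset.mem_range.mpr (Nat.lt_succ_of_le hk))
  have hM0 : 0 ≤ M := Finset.sum_nonneg hMnn
  have hδ0 : 0 ≤ δ := Finset.sum_nonneg hδnn
  have key := hA _ u φ ψ M δ (by exact_mod_cast hu) hM (by exact_mod_cast hφ)
    (by exact_mod_cast hψ) hφr hψr hδb
  calc cSupNorm m (fun x => u (φ x) - u (ψ x))
      = ∑ j ∈ Finset.range (m + 1), ⨆ x, ‖iteratedFDeriv ℝ j (fun x => u (φ x) - u (ψ x)) x‖ :=
        rfl
    _ ≤ ∑ _j ∈ Finset.range (m + 1), C * M * δ := by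
        apply Finset.sum_le_sum
        intro j hj
        exact Real.iSup_le (fun x => key j (Nat.lt_succ_iff.mp (Finset.mem_range.mp hj)) x)
          (mul_nonneg (mul_nonneg hC.le hM0) hδ0)
    _ = (m + 1) * (C * M * δ) := by
        rw [Finset.sum_const, Finset.card_range, nsmul_eq_mul]
        push_cast
        ring
    _ = (m + 1) * C * M * δ := by ring
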